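/- With independent inputs X_1,...,X_M and output Y on finite alphabets, define the rate point r by r_i = I(X_i; Y | X_{i+1},...,X_M) for i < M and r_M = I(X_M; Y). Then for every k ∈ [M], ∑_{j=1}^k r_j = I(X_1,...,X_k; Y | X_{k+1},...,X_M). Consequently r lies in the fundamental region R = {r ≥ 0 : ∑_{i∈S} r_i ≤ I(X_S; Y | X_{S^c}) ∀S ⊆ [M]} and achieves equality for every initial segment S = {1,...,k}. -/

import Mathlib

set_option linter.unusedSectionVars false


open Finset

/-- Marginal joint pmf of `(X_S, Y)` obtained from the joint pmf `p` of
`(X_1,…,X_M, Y)` by summing out inputs outside `S`; evaluated at the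
values that `x` takes on `S` and at `y`. -/
noncomputable def margXY {M : ℕ} {α : Fin M → Type*} [∀ i, Fintype (α i)]
    [∀ i, DecidableEq (α i)] {β : Type*} [Fintype β]
    (p : (∀ i, α i) → β → ℝ) (S : Finset (Fin M)) (x : ∀ i, α i) (y : β) : ℝ :=
  ∑ x' : ∀ i, α i, if ∀ i ∈ S, x' i = x i then p x' y else 0

/-- Marginal pmf of `X_S`. -/
noncomputable def margX {M : ℕ} {α : Fin M → Type*} [∀ i, Fintype (α i)]
    [∀ i, DecidableEq (α i)] {β : Type*} [Fintype β]
    (p : (∀ i, α i) → β → ℝ) (S : Finset (Fin M)) (x : ∀ i, α i) : ℝ :=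
  ∑ y : β, margXY p S x y

/-- Conditional mutual information `I(X_S; Y | X_A)`, via the standard
sum formula. -/
noncomputable def condMI {M : ℕ} {α : Fin M → Type*} [∀ i, Fintype (α i)]
    [∀ i, DecidableEq (α i)] {β : Type*} [Fintype β]
    (p : (∀ i, α i) → β → ℝ) (S A : Finset (Fin M)) : ℝ :=
  ∑ x : ∀ i, α i, ∑ y : β,
    p x y * Real.log ((margXY p (S ∪ A) x y * margX p A x) /
      (margX p (S ∪ A) x * margXY p A x y))

/-- `p` is a probability mass function. -/
def IsProb {M : ℕ} {α : Fin M → Type*} [∀ i, Fintype (α i)]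
    [∀ i, DecidableEq (α i)] {β : Type*} [Fintype β]
    (p : (∀ i, α i) → β → ℝ) : Prop :=
  (∀ x y, 0 ≤ p x y) ∧ ∑ x : ∀ i, α i, ∑ y : β, p x y = 1

/-- The inputs `X_1, …, X_M` are mutually independent. -/
def IndepInputs {M : ℕ} {α : Fin M → Type*} [∀ i, Fintype (α i)]
    [∀ i, DecidableEq (α i)] {β : Type*} [Fintype β]
    (p : (∀ i, α i) → β → ℝ) : Prop :=
  ∀ x : ∀ i, α i, margX p Finset.univ x = ∏ i : Fin M, margX p {i} x

/-- Membership in the fundamental region `R`. -/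
def memR {M : ℕ} {α : Fin M → Type*} [∀ i, Fintype (α i)]
    [∀ i, DecidableEq (α i)] {β : Type*} [Fintype β]
    (p : (∀ i, α i) → β → ℝ) (r : Fin M → ℝ) : Prop :=
  (∀ i, 0 ≤ r i) ∧ ∀ S : Finset (Fin M), ∑ i ∈ S, r i ≤ condMI p S Sᶜ

/-- Membership in the front facet `F_S`. -/
def memF {M : ℕ} {α : Fin M → Type*} [∀ i, Fintype (α i)]
    [∀ i, DecidableEq (α i)] {β : Type*} [Fintype β]
    (p : (∀ i, α i) → β → ℝ) (S : Finset (Fin M)) (r : Fin M → ℝ) : Prop :=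
  memR p r ∧ ∑ i ∈ S, r i = condMI p S Sᶜ

/-- Membership in the back face `B_A`. -/
def memB {M : ℕ} {α : Fin M → Type*} [∀ i, Fintype (α i)]
    [∀ i, DecidableEq (α i)] {β : Type*} [Fintype β]
    (p : (∀ i, α i) → β → ℝ) (A : Finset (Fin M)) (r : Fin M → ℝ) : Prop :=
  memR p r ∧ ∀ i ∈ A, r i = 0

section Aux

variable {M : ℕ} {α : Fin M → Type*} [∀ i, Fintype (α i)]
    [∀ i, DecidableEq (α i)] {β : Type*} [Fintype β]

/-- Number of completions off `U`. -/
noncomputable def NN (α : Fin M → Type*) [∀ i, Fintype (α i)] (U : Finset (Fin M)) : ℝ :=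
  ∏ i ∈ Uᶜ, (Fintype.card (α i) : ℝ)

lemma sum_pi_prod (h : ∀ i, α i → ℝ) :
    ∑ x : ∀ i, α i, ∏ i, h i (x i) = ∏ i, ∑ a : α i, h i a := by
  rw [Finset.prod_univ_sum, Fintype.piFinset_univ]

lemma prod_base_eq (U : Finset (Fin M)) (x' x : ∀ i, α i) :
    ∏ j, (if j ∈ U then (if x j = x' j then (1:ℝ) else 0) else 1)
      = (if ∀ j ∈ U, x j = x' j then (1:ℝ) else 0) := by
  by_cases h : ∀ j ∈ U, x j = x' j
  · rw [if_pos h]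
    exact Finset.prod_eq_one fun j _ => by
      by_cases hj : j ∈ U
      · simp [hj, h j hj]
      · simp [hj]
  · rw [if_neg h]
    push_neg at h
    obtain ⟨j, hj, hne⟩ := h
    exact Finset.prod_eq_zero (Finset.mem_univ j) (by simp [hj, hne])

lemma sum_base (U : Finset (Fin M)) (x' : ∀ i, α i) (j : Fin M) :
    ∑ a : α j, (if j ∈ U then (if a = x' j then (1:ℝ) else 0) else 1)
      = if j ∈ U then 1 else (Fintype.card (α j) : ℝ) := by
  by_cases h : j ∈ U
  · simp [h, Finset.sum_ite_eq']
  · simp [h, Finset.card_univ]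

lemma sum_ite_agree_const (U : Finset (Fin M)) (x' : ∀ i, α i) (c : ℝ) :
    ∑ x : ∀ j, α j, (if ∀ j ∈ U, x j = x' j then c else 0) = NN α U * c := by
  have key : ∀ x : ∀ j, α j, (if ∀ j ∈ U, x j = x' j then c else 0)
      = c * ∏ j, (if j ∈ U then (if x j = x' j then (1:ℝ) else 0) else 1) := by
    intro x
    rw [prod_base_eq]
    split_ifs <;> ring
  rw [Finset.sum_congr rfl fun x _ => key x, ← Finset.mul_sum,
    sum_pi_prod (fun j a => if j ∈ U then (if a = x' j then (1:ℝ) else 0) else 1),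
    Finset.prod_congr rfl fun j _ => sum_base U x' j]
  have : ∏ j, (if j ∈ U then (1:ℝ) else (Fintype.card (α j) : ℝ)) = NN α U := by
    rw [← Finset.prod_mul_prod_compl U]
    rw [Finset.prod_congr rfl (fun j hj => if_pos hj), Finset.prod_const_one, one_mul]
    exact Finset.prod_congr rfl fun j hj => if_neg (Finset.mem_compl.mp hj)
  rw [this, mul_comm]


lemma sum_ite_agree (U : Finset (Fin M)) (x' : ∀ i, α i) {i : Fin M} (hi : i ∉ U)
    (v : α i → ℝ) :
    ∑ x : ∀ j, α j, (if ∀ j ∈ U, x j = x' j then v (x i) else 0)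
      = NN α (insert i U) * ∑ a : α i, v a := by
  classical
  set base : ∀ j, α j → ℝ :=
    fun j a => if j ∈ U then (if a = x' j then (1:ℝ) else 0) else 1 with hbase
  set h : ∀ j, α j → ℝ := Function.update base i v with hh
  have hprod : ∀ x : ∀ j, α j,
      (if ∀ j ∈ U, x j = x' j then v (x i) else 0) = ∏ j, h j (x j) := by
    intro x
    rw [← Finset.mul_prod_erase Finset.univ _ (Finset.mem_univ i)]
    have h1 : h i (x i) = v (x i) := by rw [hh, Function.update_self]
    have h2 : ∏ j ∈ Finset.univ.erase i, h j (x j)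
        = ∏ j ∈ Finset.univ.erase i, base j (x j) :=
      Finset.prod_congr rfl fun j hj => by
        rw [hh, Function.update_of_ne (Finset.mem_erase.mp hj).1]
    have h3 : ∏ j ∈ Finset.univ.erase i, base j (x j)
        = ∏ j, base j (x j) := by
      apply Finset.prod_subset (Finset.subset_univ _)
      intro j _ hj
      have : j = i := by
        by_contra hne
        exact hj (Finset.mem_erase.mpr ⟨hne, Finset.mem_univ j⟩)
      rw [hbase]
      simp [this, hi]
    rw [h1, h2, h3, prod_base_eq]
    split_ifs <;> ring
  rw [Finset.sum_congr rfl fun x _ => hprod x, sum_pi_prod h,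
    ← Finset.mul_prod_erase Finset.univ _ (Finset.mem_univ i)]
  have h4 : ∑ a : α i, h i a = ∑ a : α i, v a := by rw [hh, Function.update_self]
  have h5 : ∏ j ∈ Finset.univ.erase i, (∑ a : α j, h j a)
      = ∏ j ∈ Finset.univ.erase i, (∑ a : α j, base j a) :=
    Finset.prod_congr rfl fun j hj => by
      rw [hh, Function.update_of_ne (Finset.mem_erase.mp hj).1]
  have h6 : ∀ j, (∑ a : α j, base j a) = if j ∈ U then 1 else (Fintype.card (α j) : ℝ) :=
    fun j => sum_base U x' j
  have h7 : ∏ j ∈ Finset.univ.erase i, (∑ a : α j, base j a) = NN α (insert i U) := by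
    rw [Finset.prod_congr rfl fun j _ => h6 j]
    have hsub : (insert i U)ᶜ ⊆ Finset.univ.erase i := by
      intro j hj
      simp only [Finset.mem_compl, Finset.mem_insert, not_or] at hj
      exact Finset.mem_erase.mpr ⟨hj.1, Finset.mem_univ j⟩
    have hone : ∀ j ∈ Finset.univ.erase i, j ∉ (insert i U)ᶜ →
        (if j ∈ U then (1:ℝ) else (Fintype.card (α j) : ℝ)) = 1 := by
      intro j hj hj2
      have hji : j ≠ i := (Finset.mem_erase.mp hj).1
      have : j ∈ U := by
        simp only [Finset.mem_compl, not_not] at hj2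
        rcases Finset.mem_insert.mp hj2 with h | h
        · exact absurd h hji
        · exact h
      exact if_pos this
    rw [← Finset.prod_subset hsub hone]
    exact Finset.prod_congr rfl fun j hj => if_neg (by
      simp only [Finset.mem_compl, Finset.mem_insert, not_or] at hj
      exact hj.2)
  rw [h4, h5, h7, mul_comm]

variable (p : (∀ i, α i) → β → ℝ)

lemma margXY_nonneg (hp0 : ∀ x y, 0 ≤ p x y) (U : Finset (Fin M)) (x : ∀ i, α i) (y : β) :
    0 ≤ margXY p U x y :=
  Finset.sum_nonneg fun x' _ => by
    split_ifs
    · exact hp0 x' y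
    · exact le_refl 0

lemma le_margXY (hp0 : ∀ x y, 0 ≤ p x y) (U : Finset (Fin M)) (x : ∀ i, α i) (y : β) :
    p x y ≤ margXY p U x y := by
  have := Finset.single_le_sum (f := fun x' => if ∀ i ∈ U, x' i = x i then p x' y else 0)
    (fun x' _ => by split_ifs; exacts [hp0 x' y, le_refl 0]) (Finset.mem_univ x)
  simpa [margXY] using this

lemma margX_nonneg (hp0 : ∀ x y, 0 ≤ p x y) (U : Finset (Fin M)) (x : ∀ i, α i) :
    0 ≤ margX p U x :=
  Finset.sum_nonneg fun y _ => margXY_nonneg p hp0 U x y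

lemma margXY_le_margX (hp0 : ∀ x y, 0 ≤ p x y) (U : Finset (Fin M)) (x : ∀ i, α i) (y : β) :
    margXY p U x y ≤ margX p U x :=
  Finset.single_le_sum (f := fun y => margXY p U x y)
    (fun y _ => margXY_nonneg p hp0 U x y) (Finset.mem_univ y)

lemma margXY_pos (hp0 : ∀ x y, 0 ≤ p x y) (U : Finset (Fin M)) {x : ∀ i, α i} {y : β}
    (h : 0 < p x y) : 0 < margXY p U x y :=
  lt_of_lt_of_le h (le_margXY p hp0 U x y)

lemma margX_pos (hp0 : ∀ x y, 0 ≤ p x y) (U : Finset (Fin M)) {x : ∀ i, α i} {y : β}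
    (h : 0 < p x y) : 0 < margX p U x :=
  lt_of_lt_of_le (margXY_pos p hp0 U h) (margXY_le_margX p hp0 U x y)

lemma margXY_congr (U : Finset (Fin M)) {x x'' : ∀ i, α i} (y : β)
    (h : ∀ j ∈ U, x j = x'' j) : margXY p U x y = margXY p U x'' y := by
  unfold margXY
  refine Finset.sum_congr rfl fun x' _ => ?_
  refine if_congr ?_ rfl rfl
  constructor
  · exact fun hc j hj => (hc j hj).trans (h j hj)
  · exact fun hc j hj => (hc j hj).trans (h j hj).symm

lemma margX_congr (U : Finset (Fin M)) {x x'' : ∀ i, α i}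
    (h : ∀ j ∈ U, x j = x'' j) : margX p U x = margX p U x'' :=
  Finset.sum_congr rfl fun y _ => margXY_congr p U y h

/-- Lemma A: summing a `U`-local function against the `U`-marginal. -/
lemma sum_margXY_mul (U : Finset (Fin M)) (y : β) (F : (∀ i, α i) → ℝ)
    (hF : ∀ x x'' : ∀ i, α i, (∀ j ∈ U, x j = x'' j) → F x = F x'') :
    ∑ x : ∀ i, α i, margXY p U x y * F x = NN α U * ∑ x : ∀ i, α i, p x y * F x := by
  unfold margXY
  have step1 : ∀ x : ∀ i, α i,
      (∑ x' : ∀ i, α i, if ∀ j ∈ U, x' j = x j then p x' y else 0) * F x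
        = ∑ x' : ∀ i, α i, (if ∀ j ∈ U, x' j = x j then p x' y * F x else 0) := by
    intro x
    rw [Finset.sum_mul]
    exact Finset.sum_congr rfl fun x' _ => by split_ifs <;> simp
  rw [Finset.sum_congr rfl fun x _ => step1 x, Finset.sum_comm]
  have step2 : ∀ x' : ∀ i, α i,
      (∑ x : ∀ i, α i, if ∀ j ∈ U, x' j = x j then p x' y * F x else 0)
        = ∑ x : ∀ i, α i, (if ∀ j ∈ U, x j = x' j then p x' y * F x' else 0) := by
    intro x'
    refine Finset.sum_congr rfl fun x _ => ?_
    have hiff : (∀ j ∈ U, x' j = x j) ↔ (∀ j ∈ U, x j = x' j) :=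
      ⟨fun h j hj => (h j hj).symm, fun h j hj => (h j hj).symm⟩
    by_cases h : ∀ j ∈ U, x j = x' j
    · rw [if_pos (hiff.mpr h), if_pos h, hF x x' h]
    · rw [if_neg (fun hc => h (hiff.mp hc)), if_neg h]
  rw [Finset.sum_congr rfl fun x' _ => step2 x']
  rw [Finset.sum_congr rfl fun x' _ => sum_ite_agree_const U x' (p x' y * F x')]
  rw [← Finset.mul_sum]

/-- Lemma A2: summing a function local to `insert i U` against the `U`-marginal,
`i ∉ U`. -/
lemma sum_margXY_mul' (U : Finset (Fin M)) (y : β) {i : Fin M} (hi : i ∉ U)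
    (F : (∀ i, α i) → ℝ)
    (hF : ∀ x x'' : ∀ i, α i, (∀ j ∈ insert i U, x j = x'' j) → F x = F x'') :
    ∑ x : ∀ i, α i, margXY p U x y * F x
      = NN α (insert i U) * ∑ x : ∀ i, α i, p x y *
          ∑ a : α i, F (Function.update x i a) := by
  unfold margXY
  have step1 : ∀ x : ∀ i, α i,
      (∑ x' : ∀ i, α i, if ∀ j ∈ U, x' j = x j then p x' y else 0) * F x
        = ∑ x' : ∀ i, α i, (if ∀ j ∈ U, x' j = x j then p x' y * F x else 0) := by
    intro x
    rw [Finset.sum_mul]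
    exact Finset.sum_congr rfl fun x' _ => by split_ifs <;> simp
  rw [Finset.sum_congr rfl fun x _ => step1 x, Finset.sum_comm]
  have step2 : ∀ x' : ∀ i, α i,
      (∑ x : ∀ i, α i, if ∀ j ∈ U, x' j = x j then p x' y * F x else 0)
        = ∑ x : ∀ i, α i,
            (if ∀ j ∈ U, x j = x' j then p x' y * F (Function.update x' i (x i)) else 0) := by
    intro x'
    refine Finset.sum_congr rfl fun x _ => ?_
    have hiff : (∀ j ∈ U, x' j = x j) ↔ (∀ j ∈ U, x j = x' j) :=
      ⟨fun h j hj => (h j hj).symm, fun h j hj => (h j hj).symm⟩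
    by_cases h : ∀ j ∈ U, x j = x' j
    · rw [if_pos (hiff.mpr h), if_pos h]
      have : F x = F (Function.update x' i (x i)) := by
        apply hF
        intro j hj
        rcases Finset.mem_insert.mp hj with rfl | hjU
        · rw [Function.update_self]
        · rw [Function.update_of_ne (fun hji : j = i => hi (hji ▸ hjU)), h j hjU]
      rw [this]
    · rw [if_neg (fun hc => h (hiff.mp hc)), if_neg h]
  rw [Finset.sum_congr rfl fun x' _ => step2 x']
  have step3 : ∀ x' : ∀ i, α i,
      (∑ x : ∀ i, α i,
          if ∀ j ∈ U, x j = x' j then p x' y * F (Function.update x' i (x i)) else 0)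
        = NN α (insert i U) * (p x' y * ∑ a : α i, F (Function.update x' i a)) := by
    intro x'
    rw [sum_ite_agree U x' hi (fun a => p x' y * F (Function.update x' i a))]
    rw [← Finset.mul_sum]
  rw [Finset.sum_congr rfl fun x' _ => step3 x', ← Finset.mul_sum]

lemma sum_margXY_update {C : Finset (Fin M)} {i : Fin M} (hi : i ∉ C)
    (x : ∀ j, α j) (y : β) :
    ∑ a : α i, margXY p (insert i C) (Function.update x i a) y = margXY p C x y := by
  unfold margXY
  rw [Finset.sum_comm]
  refine Finset.sum_congr rfl fun x' _ => ?_
  have hcond : ∀ a : α i, (∀ j ∈ insert i C, x' j = Function.update x i a j)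
      ↔ (x' i = a ∧ ∀ j ∈ C, x' j = x j) := by
    intro a
    constructor
    · intro h
      refine ⟨by simpa [Function.update_self] using h i (Finset.mem_insert_self i C), ?_⟩
      intro j hj
      have hji : j ≠ i := fun hji : j = i => hi (hji ▸ hj)
      have := h j (Finset.mem_insert_of_mem hj)
      rwa [Function.update_of_ne hji] at this
    · intro ⟨h1, h2⟩ j hj
      rcases Finset.mem_insert.mp hj with rfl | hjC
      · rwa [Function.update_self]
      · rw [Function.update_of_ne (fun hji : j = i => hi (hji ▸ hjC))]
        exact h2 j hjC
  have : ∀ a : α i, (if ∀ j ∈ insert i C, x' j = Function.update x i a j then p x' y else 0)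
      = (if x' i = a then (if ∀ j ∈ C, x' j = x j then p x' y else 0) else 0) := by
    intro a
    rw [if_congr (hcond a) rfl rfl, ite_and]
  rw [Finset.sum_congr rfl fun a _ => this a]
  rw [Finset.sum_ite_eq]
  simp

/-- `∑ p log margXY`. -/
noncomputable def LL (U : Finset (Fin M)) : ℝ :=
  ∑ x : ∀ i, α i, ∑ y : β, p x y * Real.log (margXY p U x y)

/-- `∑ p log margX`. -/
noncomputable def LX (U : Finset (Fin M)) : ℝ :=
  ∑ x : ∀ i, α i, ∑ y : β, p x y * Real.log (margX p U x)

lemma nonempty_of_prob (hsum : ∑ x : ∀ i, α i, ∑ y : β, p x y = 1) :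
    Nonempty (∀ i, α i) ∧ Nonempty β := by
  constructor
  · by_contra h
    rw [not_nonempty_iff] at h
    rw [Finset.univ_eq_empty, Finset.sum_empty] at hsum
    exact zero_ne_one hsum
  · by_contra h
    rw [not_nonempty_iff] at h
    simp only [Finset.univ_eq_empty (α := β), Finset.sum_empty, Finset.sum_const_zero] at hsum
    exact zero_ne_one hsum

lemma NN_pos (hne : Nonempty (∀ i, α i)) (U : Finset (Fin M)) : 0 < NN α U := by
  refine Finset.prod_pos fun i _ => ?_
  have : Nonempty (α i) := ⟨hne.some i⟩
  exact_mod_cast Fintype.card_pos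

lemma mul_log_le {a z : ℝ} (ha : 0 ≤ a) (hz : 0 < a → 0 < z) :
    a * Real.log z ≤ a * z - a := by
  rcases eq_or_lt_of_le ha with h | h
  · simp [← h]
  · have := Real.log_le_sub_one_of_pos (hz h)
    nlinarith

lemma sum_log_nonpos (hp0 : ∀ x y, 0 ≤ p x y)
    (hsum : ∑ x : ∀ i, α i, ∑ y : β, p x y = 1)
    (z : (∀ i, α i) → β → ℝ)
    (hz : ∀ x y, 0 < p x y → 0 < z x y)
    (hE : ∑ x : ∀ i, α i, ∑ y : β, p x y * z x y ≤ 1) :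
    ∑ x : ∀ i, α i, ∑ y : β, p x y * Real.log (z x y) ≤ 0 := by
  have h1 : ∑ x : ∀ i, α i, ∑ y : β, p x y * Real.log (z x y)
      ≤ ∑ x : ∀ i, α i, ∑ y : β, (p x y * z x y - p x y) :=
    Finset.sum_le_sum fun x _ => Finset.sum_le_sum fun y _ =>
      mul_log_le (hp0 x y) (hz x y)
  have h2 : ∑ x : ∀ i, α i, ∑ y : β, (p x y * z x y - p x y)
      = (∑ x : ∀ i, α i, ∑ y : β, p x y * z x y) - 1 := by
    rw [← hsum]
    simp [Finset.sum_sub_distrib]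
  linarith

lemma sum_margX_total (hsum : ∑ x : ∀ i, α i, ∑ y : β, p x y = 1) (U : Finset (Fin M)) :
    ∑ x : ∀ i, α i, margX p U x = NN α U := by
  unfold margX
  rw [Finset.sum_comm]
  have h1 : ∀ y, ∑ x : ∀ i, α i, margXY p U x y = NN α U * ∑ x : ∀ i, α i, p x y := by
    intro y
    have := sum_margXY_mul p U y (fun _ => (1:ℝ)) (fun _ _ _ => rfl)
    simpa using this
  rw [Finset.sum_congr rfl fun y _ => h1 y, ← Finset.mul_sum, Finset.sum_comm, hsum, mul_one]

lemma condMI_eq (hp0 : ∀ x y, 0 ≤ p x y) (S A : Finset (Fin M)) :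
    condMI p S A = LL p (S ∪ A) + LX p A - LX p (S ∪ A) - LL p A := by
  unfold condMI LL LX
  have key : ∀ (x : ∀ i, α i) (y : β),
      p x y * Real.log ((margXY p (S ∪ A) x y * margX p A x) /
        (margX p (S ∪ A) x * margXY p A x y))
      = p x y * Real.log (margXY p (S ∪ A) x y) + p x y * Real.log (margX p A x)
        - p x y * Real.log (margX p (S ∪ A) x) - p x y * Real.log (margXY p A x y) := by
    intro x y
    rcases eq_or_lt_of_le (hp0 x y) with h | h
    · rw [← h]; ring
    · have h1 := margXY_pos p hp0 (S ∪ A) h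
      have h2 := margX_pos p hp0 A h
      have h3 := margX_pos p hp0 (S ∪ A) h
      have h4 := margXY_pos p hp0 A h
      rw [Real.log_div (by positivity) (by positivity), Real.log_mul h1.ne' h2.ne',
        Real.log_mul h3.ne' h4.ne']
      ring
  rw [Finset.sum_congr rfl fun x _ => Finset.sum_congr rfl fun y _ => key x y]
  simp [Finset.sum_add_distrib, Finset.sum_sub_distrib]

lemma condMI_chain (hp0 : ∀ x y, 0 ≤ p x y) (a : Fin M) (T A : Finset (Fin M)) :
    condMI p (insert a T) A = condMI p T (insert a A) + condMI p {a} A := by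
  rw [condMI_eq p hp0, condMI_eq p hp0, condMI_eq p hp0]
  have h1 : insert a T ∪ A = T ∪ insert a A := by
    rw [Finset.insert_union, Finset.union_insert]
  have h2 : ({a} : Finset (Fin M)) ∪ A = insert a A := (Finset.insert_eq a A).symm
  rw [h1, h2]
  ring

lemma Ebound1 (hp0 : ∀ x y, 0 ≤ p x y)
    (hsum : ∑ x : ∀ i, α i, ∑ y : β, p x y = 1) (S A : Finset (Fin M)) :
    ∑ x : ∀ i, α i, ∑ y : β, p x y *
      ((margX p (S ∪ A) x * margXY p A x y) / (margXY p (S ∪ A) x y * margX p A x)) ≤ 1 := by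
  classical
  obtain ⟨hne, -⟩ := nonempty_of_prob p hsum
  set T := S ∪ A with hT
  have hAT : A ⊆ T := Finset.subset_union_right
  have hNN := NN_pos (α := α) hne T
  set zh : (∀ i, α i) → β → ℝ := fun x y =>
    if 0 < margXY p T x y ∧ 0 < margX p A x then
      (margX p T x * margXY p A x y) / (margXY p T x y * margX p A x) else 0 with hzh
  have hstep0 : ∀ (x : ∀ i, α i) (y : β), p x y *
      ((margX p T x * margXY p A x y) / (margXY p T x y * margX p A x)) = p x y * zh x y := by
    intro x y
    rcases eq_or_lt_of_le (hp0 x y) with h | h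
    · rw [← h]; ring
    · rw [hzh]
      simp only
      rw [if_pos (⟨margXY_pos p hp0 T h, margX_pos p hp0 A h⟩ :
        0 < margXY p T x y ∧ 0 < margX p A x)]
  rw [Finset.sum_congr rfl fun x _ => Finset.sum_congr rfl fun y _ => hstep0 x y,
    Finset.sum_comm]
  -- multiply by NN α T
  rw [← mul_le_mul_iff_right₀ hNN, mul_one, Finset.mul_sum]
  have hloc : ∀ y, NN α T * ∑ x : ∀ i, α i, p x y * zh x y
      = ∑ x : ∀ i, α i, margXY p T x y * zh x y := by
    intro y
    refine (sum_margXY_mul p T y (fun x => zh x y) ?_).symm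
    intro x x'' hag
    have hagA : ∀ j ∈ A, x j = x'' j := fun j hj => hag j (hAT hj)
    rw [hzh]
    simp only
    rw [margXY_congr p T y hag, margX_congr p T hag, margXY_congr p A y hagA,
      margX_congr p A hagA]
  rw [Finset.sum_congr rfl fun y _ => hloc y]
  have hb1 : ∀ (y : β) (x : ∀ i, α i), margXY p T x y * zh x y
      ≤ (if 0 < margX p A x then margX p T x * margXY p A x y / margX p A x else 0) := by
    intro y x
    rw [hzh]
    simp only
    split_ifs with h1 h2 h3
    · refine le_of_eq ?_
      field_simp [h1.1.ne', h2.ne']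
    · exact absurd h1.2 h2
    · rw [mul_zero]
      exact div_nonneg (mul_nonneg (margX_nonneg p hp0 T x) (margXY_nonneg p hp0 A x y))
        (margX_nonneg p hp0 A x)
    · rw [mul_zero]
  calc ∑ y : β, ∑ x : ∀ i, α i, margXY p T x y * zh x y
      ≤ ∑ y : β, ∑ x : ∀ i, α i,
          (if 0 < margX p A x then margX p T x * margXY p A x y / margX p A x else 0) :=
        Finset.sum_le_sum fun y _ => Finset.sum_le_sum fun x _ => hb1 y x
    _ = ∑ x : ∀ i, α i, ∑ y : β,
          (if 0 < margX p A x then margX p T x * margXY p A x y / margX p A x else 0) :=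
        Finset.sum_comm
    _ ≤ ∑ x : ∀ i, α i, margX p T x := by
        refine Finset.sum_le_sum fun x _ => ?_
        by_cases h : 0 < margX p A x
        · rw [Finset.sum_congr rfl fun y _ => if_pos h]
          have : ∑ y : β, margX p T x * margXY p A x y / margX p A x
              = margX p T x * (∑ y : β, margXY p A x y) / margX p A x := by
            rw [← Finset.sum_div, ← Finset.mul_sum]
          rw [this]
          have hAx : ∑ y : β, margXY p A x y = margX p A x := rfl
          rw [hAx, mul_div_assoc, div_self h.ne', mul_one]
        · rw [Finset.sum_congr rfl fun y _ => if_neg h, Finset.sum_const_zero]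
          exact margX_nonneg p hp0 T x
    _ = NN α T := sum_margX_total p hsum T

lemma condMI_nonneg (hp0 : ∀ x y, 0 ≤ p x y)
    (hsum : ∑ x : ∀ i, α i, ∑ y : β, p x y = 1) (S A : Finset (Fin M)) :
    0 ≤ condMI p S A := by
  have key : condMI p S A = -∑ x : ∀ i, α i, ∑ y : β, p x y * Real.log
      ((margX p (S ∪ A) x * margXY p A x y) / (margXY p (S ∪ A) x y * margX p A x)) := by
    unfold condMI
    rw [← Finset.sum_neg_distrib]
    refine Finset.sum_congr rfl fun x _ => ?_
    rw [← Finset.sum_neg_distrib]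
    refine Finset.sum_congr rfl fun y _ => ?_
    rw [show (margXY p (S ∪ A) x y * margX p A x) / (margX p (S ∪ A) x * margXY p A x y)
        = ((margX p (S ∪ A) x * margXY p A x y) / (margXY p (S ∪ A) x y * margX p A x))⁻¹ by
      rw [inv_div]]
    rw [Real.log_inv]
    ring
  rw [key, neg_nonneg]
  refine sum_log_nonpos p hp0 hsum _ ?_ (Ebound1 p hp0 hsum S A)
  intro x y h
  have h1 := margXY_pos p hp0 (S ∪ A) h
  have h2 := margX_pos p hp0 A h
  have h3 := margX_pos p hp0 (S ∪ A) h
  have h4 := margXY_pos p hp0 A h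
  positivity

lemma Ebound2 (hp0 : ∀ x y, 0 ≤ p x y)
    (hsum : ∑ x : ∀ i, α i, ∑ y : β, p x y = 1) {C B : Finset (Fin M)} {i : Fin M}
    (hCB : C ⊆ B) (hi : i ∉ B) :
    ∑ x : ∀ i, α i, ∑ y : β, p x y *
      ((margXY p B x y * margXY p (insert i C) x y) /
        (margXY p (insert i B) x y * margXY p C x y)) ≤ 1 := by
  classical
  obtain ⟨hne, -⟩ := nonempty_of_prob p hsum
  have hiC : i ∉ C := fun h => hi (hCB h)
  have hNN := NN_pos (α := α) hne (insert i B)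
  set zh : (∀ i, α i) → β → ℝ := fun x y =>
    if 0 < margXY p (insert i B) x y ∧ 0 < margXY p C x y then
      (margXY p B x y * margXY p (insert i C) x y) /
        (margXY p (insert i B) x y * margXY p C x y) else 0 with hzh
  set u : (∀ i, α i) → β → ℝ := fun x y =>
    if 0 < margXY p C x y then margXY p (insert i C) x y / margXY p C x y else 0 with hu
  have hstep0 : ∀ (x : ∀ i, α i) (y : β), p x y *
      ((margXY p B x y * margXY p (insert i C) x y) /
        (margXY p (insert i B) x y * margXY p C x y)) = p x y * zh x y := by
    intro x y
    rcases eq_or_lt_of_le (hp0 x y) with h | h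
    · rw [← h]; ring
    · rw [hzh]
      simp only
      rw [if_pos (⟨margXY_pos p hp0 (insert i B) h, margXY_pos p hp0 C h⟩ :
        0 < margXY p (insert i B) x y ∧ 0 < margXY p C x y)]
  rw [Finset.sum_congr rfl fun x _ => Finset.sum_congr rfl fun y _ => hstep0 x y,
    Finset.sum_comm]
  rw [← mul_le_mul_iff_right₀ hNN, mul_one, Finset.mul_sum]
  have hloc : ∀ y, NN α (insert i B) * ∑ x : ∀ i, α i, p x y * zh x y
      = ∑ x : ∀ i, α i, margXY p (insert i B) x y * zh x y := by
    intro y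
    refine (sum_margXY_mul p (insert i B) y (fun x => zh x y) ?_).symm
    intro x x'' hag
    have hagB : ∀ j ∈ B, x j = x'' j := fun j hj => hag j (Finset.mem_insert_of_mem hj)
    have hagC : ∀ j ∈ C, x j = x'' j := fun j hj => hagB j (hCB hj)
    have hagiC : ∀ j ∈ insert i C, x j = x'' j := by
      intro j hj
      rcases Finset.mem_insert.mp hj with rfl | hjC
      · exact hag j (Finset.mem_insert_self j B)
      · exact hagC j hjC
    rw [hzh]
    simp only
    rw [margXY_congr p (insert i B) y hag, margXY_congr p B y hagB,
      margXY_congr p C y hagC, margXY_congr p (insert i C) y hagiC]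
  rw [Finset.sum_congr rfl fun y _ => hloc y]
  have hb1 : ∀ (y : β) (x : ∀ i, α i), margXY p (insert i B) x y * zh x y
      ≤ margXY p B x y * u x y := by
    intro y x
    rw [hzh, hu]
    simp only
    split_ifs with h1 h2 h3
    · refine le_of_eq ?_
      field_simp [h1.1.ne', h2.ne']
    · exact absurd h1.2 h2
    · rw [mul_zero]
      exact mul_nonneg (margXY_nonneg p hp0 B x y)
        (div_nonneg (margXY_nonneg p hp0 (insert i C) x y) (margXY_nonneg p hp0 C x y))
    · rw [mul_zero, mul_zero]
  have hb2 : ∀ y, ∑ x : ∀ i, α i, margXY p (insert i B) x y * zh x y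
      ≤ NN α (insert i B) * ∑ x : ∀ i, α i, p x y := by
    intro y
    calc ∑ x : ∀ i, α i, margXY p (insert i B) x y * zh x y
        ≤ ∑ x : ∀ i, α i, margXY p B x y * u x y :=
          Finset.sum_le_sum fun x _ => hb1 y x
      _ = NN α (insert i B) * ∑ x : ∀ i, α i, p x y *
            ∑ a : α i, u (Function.update x i a) y := by
          refine sum_margXY_mul' p B y hi (fun x => u x y) ?_
          intro x x'' hag
          have hagC : ∀ j ∈ C, x j = x'' j := fun j hj =>
            hag j (Finset.mem_insert_of_mem (hCB hj))
          have hagiC : ∀ j ∈ insert i C, x j = x'' j := by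
            intro j hj
            rcases Finset.mem_insert.mp hj with rfl | hjC
            · exact hag j (Finset.mem_insert_self j B)
            · exact hagC j hjC
          rw [hu]
          simp only
          rw [margXY_congr p C y hagC, margXY_congr p (insert i C) y hagiC]
      _ ≤ NN α (insert i B) * ∑ x : ∀ i, α i, p x y := by
          refine mul_le_mul_of_nonneg_left (Finset.sum_le_sum fun x _ => ?_) hNN.le
          have hupd : ∀ a : α i, u (Function.update x i a) y
              = if 0 < margXY p C x y then
                  margXY p (insert i C) (Function.update x i a) y / margXY p C x y
                else 0 := by
            intro a
            have hCeq : margXY p C (Function.update x i a) y = margXY p C x y := by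
              refine margXY_congr p C y ?_
              intro j hj
              exact Function.update_of_ne (fun hji : j = i => hiC (hji ▸ hj)) a x
            rw [hu]
            simp only
            rw [hCeq]
          have : ∑ a : α i, u (Function.update x i a) y ≤ 1 := by
            rw [Finset.sum_congr rfl fun a _ => hupd a]
            by_cases h : 0 < margXY p C x y
            · rw [Finset.sum_congr rfl fun (a : α i) _ => if_pos h, ← Finset.sum_div,
                sum_margXY_update p hiC x y, div_self h.ne']
            · rw [Finset.sum_congr rfl fun (a : α i) _ => if_neg h, Finset.sum_const_zero]
              exact zero_le_one
          calc p x y * ∑ a : α i, u (Function.update x i a) y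
              ≤ p x y * 1 := mul_le_mul_of_nonneg_left this (hp0 x y)
            _ = p x y := mul_one _
  calc ∑ y : β, ∑ x : ∀ i, α i, margXY p (insert i B) x y * zh x y
      ≤ ∑ y : β, NN α (insert i B) * ∑ x : ∀ i, α i, p x y :=
        Finset.sum_le_sum fun y _ => hb2 y
    _ = NN α (insert i B) * ∑ y : β, ∑ x : ∀ i, α i, p x y := by rw [← Finset.mul_sum]
    _ = NN α (insert i B) := by rw [Finset.sum_comm, hsum, mul_one]

lemma LL_supermod (hp0 : ∀ x y, 0 ≤ p x y)
    (hsum : ∑ x : ∀ i, α i, ∑ y : β, p x y = 1) {C B : Finset (Fin M)} {i : Fin M}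
    (hCB : C ⊆ B) (hi : i ∉ B) :
    LL p (insert i C) + LL p B ≤ LL p (insert i B) + LL p C := by
  have key := sum_log_nonpos p hp0 hsum
    (fun x y => (margXY p B x y * margXY p (insert i C) x y) /
      (margXY p (insert i B) x y * margXY p C x y))
    (fun x y h => by
      have h1 := margXY_pos p hp0 B h
      have h2 := margXY_pos p hp0 (insert i C) h
      have h3 := margXY_pos p hp0 (insert i B) h
      have h4 := margXY_pos p hp0 C h
      positivity)
    (Ebound2 p hp0 hsum hCB hi)
  have hexp : ∑ x : ∀ i, α i, ∑ y : β, p x y * Real.log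
      ((margXY p B x y * margXY p (insert i C) x y) /
        (margXY p (insert i B) x y * margXY p C x y))
      = LL p B + LL p (insert i C) - LL p (insert i B) - LL p C := by
    unfold LL
    have key2 : ∀ (x : ∀ i, α i) (y : β), p x y * Real.log
        ((margXY p B x y * margXY p (insert i C) x y) /
          (margXY p (insert i B) x y * margXY p C x y))
        = p x y * Real.log (margXY p B x y) + p x y * Real.log (margXY p (insert i C) x y)
          - p x y * Real.log (margXY p (insert i B) x y)
          - p x y * Real.log (margXY p C x y) := by
      intro x y
      rcases eq_or_lt_of_le (hp0 x y) with h | h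
      · rw [← h]; ring
      · have h1 := margXY_pos p hp0 B h
        have h2 := margXY_pos p hp0 (insert i C) h
        have h3 := margXY_pos p hp0 (insert i B) h
        have h4 := margXY_pos p hp0 C h
        rw [Real.log_div (by positivity) (by positivity), Real.log_mul h1.ne' h2.ne',
          Real.log_mul h3.ne' h4.ne']
        ring
    rw [Finset.sum_congr rfl fun x _ => Finset.sum_congr rfl fun y _ => key2 x y]
    simp [Finset.sum_add_distrib, Finset.sum_sub_distrib]
  rw [hexp] at key
  linarith

lemma margX_univ (x : ∀ i, α i) : margX p Finset.univ x = ∑ y : β, p x y := by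
  unfold margX margXY
  refine Finset.sum_congr rfl fun y _ => ?_
  have : ∀ x' : ∀ i, α i, (if ∀ j ∈ Finset.univ, x' j = x j then p x' y else 0)
      = (if x' = x then p x' y else 0) := by
    intro x'
    refine if_congr ?_ rfl rfl
    constructor
    · exact fun h => funext fun j => h j (Finset.mem_univ j)
    · exact fun h j _ => congrFun h j
  rw [Finset.sum_congr rfl fun x' _ => this x', Finset.sum_ite_eq']
  simp

lemma sum_margX_single (hsum : ∑ x : ∀ i, α i, ∑ y : β, p x y = 1)
    (i : Fin M) (x : ∀ j, α j) :
    ∑ a : α i, margX p {i} (Function.update x i a) = 1 := by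
  unfold margX margXY
  have key : ∀ (a : α i) (y : β) (x' : ∀ j, α j),
      (if ∀ j ∈ ({i} : Finset (Fin M)), x' j = Function.update x i a j then p x' y else 0)
      = (if x' i = a then p x' y else 0) := by
    intro a y x'
    refine if_congr ?_ rfl rfl
    simp [Function.update_self]
  calc ∑ a : α i, ∑ y : β, ∑ x' : ∀ j, α j,
        (if ∀ j ∈ ({i} : Finset (Fin M)), x' j = Function.update x i a j then p x' y else 0)
      = ∑ a : α i, ∑ y : β, ∑ x' : ∀ j, α j, (if x' i = a then p x' y else 0) := by
        refine Finset.sum_congr rfl fun a _ => Finset.sum_congr rfl fun y _ =>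
          Finset.sum_congr rfl fun x' _ => key a y x'
    _ = ∑ y : β, ∑ x' : ∀ j, α j, ∑ a : α i, (if x' i = a then p x' y else 0) := by
        rw [Finset.sum_comm]
        refine Finset.sum_congr rfl fun y _ => Finset.sum_comm
    _ = ∑ y : β, ∑ x' : ∀ j, α j, p x' y := by
        refine Finset.sum_congr rfl fun y _ => Finset.sum_congr rfl fun x' _ => ?_
        rw [Finset.sum_ite_eq]
        simp
    _ = 1 := by rw [Finset.sum_comm, hsum]

lemma margX_single_congr {i : Fin M} {x x'' : ∀ j, α j} (h : x i = x'' i) :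
    margX p {i} x = margX p {i} x'' :=
  margX_congr p {i} (by simpa using h)

lemma margX_factor (hsum : ∑ x : ∀ i, α i, ∑ y : β, p x y = 1)
    (hind : IndepInputs p) (U : Finset (Fin M)) (x : ∀ i, α i) :
    margX p U x = ∏ i ∈ U, margX p {i} x := by
  classical
  set g : ∀ i, α i → ℝ := fun i a => margX p {i} (Function.update x i a) with hg
  have hgx : ∀ (i : Fin M) (x' : ∀ j, α j), margX p {i} x' = g i (x' i) := by
    intro i x'
    rw [hg]
    exact margX_single_congr p (by rw [Function.update_self])
  have step1 : margX p U x
      = ∑ x' : ∀ i, α i, (if ∀ j ∈ U, x' j = x j then ∑ y : β, p x' y else 0) := by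
    unfold margX margXY
    rw [Finset.sum_comm]
    refine Finset.sum_congr rfl fun x' _ => ?_
    split_ifs <;> simp
  have step2 : ∀ x' : ∀ i, α i, (∑ y : β, p x' y) = ∏ i, g i (x' i) := by
    intro x'
    rw [← margX_univ, hind x']
    exact Finset.prod_congr rfl fun i _ => hgx i x'
  rw [step1, Finset.sum_congr rfl fun x' _ => by rw [step2 x']]
  set h : ∀ i, α i → ℝ := fun i a =>
    g i a * (if i ∈ U then (if a = x i then (1:ℝ) else 0) else 1) with hh
  have step3 : ∀ x' : ∀ i, α i,
      (if ∀ j ∈ U, x' j = x j then ∏ i, g i (x' i) else 0) = ∏ i, h i (x' i) := by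
    intro x'
    rw [hh]
    simp only
    rw [Finset.prod_mul_distrib, prod_base_eq]
    split_ifs <;> ring
  rw [Finset.sum_congr rfl fun x' _ => step3 x', sum_pi_prod h]
  have step4 : ∀ i, (∑ a : α i, h i a) = if i ∈ U then g i (x i) else 1 := by
    intro i
    rw [hh]
    simp only
    by_cases hiU : i ∈ U
    · simp only [if_pos hiU, mul_ite, mul_one, mul_zero]
      rw [Finset.sum_ite_eq']
      simp
    · simp only [if_neg hiU, mul_one]
      rw [hg]
      exact sum_margX_single p hsum i x
  rw [Finset.prod_congr rfl fun i _ => step4 i, Fintype.prod_ite_mem]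
  refine Finset.prod_congr rfl fun i hiU => ?_
  rw [hg]
  simp only
  rw [Function.update_eq_self]

lemma LX_insert (hsum : ∑ x : ∀ i, α i, ∑ y : β, p x y = 1) (hp0 : ∀ x y, 0 ≤ p x y)
    (hind : IndepInputs p) {i : Fin M} {U : Finset (Fin M)} (hi : i ∉ U) :
    LX p (insert i U) = (∑ x : ∀ i, α i, ∑ y : β, p x y * Real.log (margX p {i} x))
      + LX p U := by
  unfold LX
  have hfac : ∀ x : ∀ i, α i, margX p (insert i U) x = margX p {i} x * margX p U x := by
    intro x
    rw [margX_factor p hsum hind (insert i U) x, margX_factor p hsum hind U x,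
      Finset.prod_insert hi]
  have key : ∀ (x : ∀ i, α i) (y : β),
      p x y * Real.log (margX p (insert i U) x)
      = p x y * Real.log (margX p {i} x) + p x y * Real.log (margX p U x) := by
    intro x y
    rcases eq_or_lt_of_le (hp0 x y) with h | h
    · rw [← h]; ring
    · have h1 := margX_pos p hp0 {i} h
      have h2 := margX_pos p hp0 U h
      rw [hfac x, Real.log_mul h1.ne' h2.ne']
      ring
  rw [Finset.sum_congr rfl fun x _ => Finset.sum_congr rfl fun y _ => key x y]
  simp [Finset.sum_add_distrib]

lemma condMI_mono (hp0 : ∀ x y, 0 ≤ p x y)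
    (hsum : ∑ x : ∀ i, α i, ∑ y : β, p x y = 1) (hind : IndepInputs p)
    {C B : Finset (Fin M)} {i : Fin M} (hCB : C ⊆ B) (hi : i ∉ B) :
    condMI p {i} C ≤ condMI p {i} B := by
  have hiC : i ∉ C := fun h => hi (hCB h)
  rw [condMI_eq p hp0, condMI_eq p hp0]
  have e1 : ({i} : Finset (Fin M)) ∪ C = insert i C := (Finset.insert_eq i C).symm
  have e2 : ({i} : Finset (Fin M)) ∪ B = insert i B := (Finset.insert_eq i B).symm
  rw [e1, e2]
  have h3 := LX_insert p hsum hp0 hind hiC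
  have h4 := LX_insert p hsum hp0 hind hi
  have h5 := LL_supermod p hp0 hsum hCB hi
  linarith

end Aux

/-- The successive-decoding rate point `r_i = I(X_i; Y | X_{i+1},…,X_M)`
satisfies `∑_{j≤k} r_j = I(X_{1..k}; Y | X_{k+1..M})` for each `k`, is
nonnegative, and lies in the fundamental region `R`. -/
theorem stmt10 {M : ℕ} {α : Fin M → Type*} [∀ i, Fintype (α i)]
    [∀ i, DecidableEq (α i)] {β : Type*} [Fintype β]
    (p : (∀ i, α i) → β → ℝ) (hp : IsProb p) (hind : IndepInputs p) :
    (∀ k : Fin M, ∑ j ∈ Finset.Iic k, condMI p {j} (Finset.Ioi j) =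
        condMI p (Finset.Iic k) (Finset.Ioi k)) ∧
    (∀ i : Fin M, 0 ≤ condMI p {i} (Finset.Ioi i)) ∧
    (∀ S : Finset (Fin M),
        ∑ i ∈ S, condMI p {i} (Finset.Ioi i) ≤ condMI p S Sᶜ) := by
  refine ⟨?_, ?_, ?_⟩
  · have main : ∀ (n : ℕ) (h : n < M),
        ∑ j ∈ Finset.Iic (⟨n, h⟩ : Fin M), condMI p {j} (Finset.Ioi j)
          = condMI p (Finset.Iic (⟨n, h⟩ : Fin M)) (Finset.Ioi (⟨n, h⟩ : Fin M)) := by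
      intro n
      induction n with
      | zero =>
        intro h
        have hIic : Finset.Iic (⟨0, h⟩ : Fin M) = {(⟨0, h⟩ : Fin M)} := by
          ext j
          simp only [Finset.mem_Iic, Finset.mem_singleton, Fin.le_def, Fin.ext_iff]
          omega
        rw [hIic, Finset.sum_singleton]
      | succ n ih =>
        intro h
        have hn : n < M := by omega
        have h1 : Finset.Iic (⟨n+1, h⟩ : Fin M)
            = insert (⟨n+1, h⟩ : Fin M) (Finset.Iic (⟨n, hn⟩ : Fin M)) := by
          ext j
          simp only [Finset.mem_Iic, Finset.mem_insert, Fin.le_def, Fin.ext_iff]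
          omega
        have h2 : (⟨n+1, h⟩ : Fin M) ∉ Finset.Iic (⟨n, hn⟩ : Fin M) := by
          simp only [Finset.mem_Iic, Fin.le_def]
          omega
        have h3 : insert (⟨n+1, h⟩ : Fin M) (Finset.Ioi (⟨n+1, h⟩ : Fin M))
            = Finset.Ioi (⟨n, hn⟩ : Fin M) := by
          ext j
          simp only [Finset.mem_insert, Finset.mem_Ioi, Fin.lt_def, Fin.ext_iff]
          omega
        rw [h1, Finset.sum_insert h2, ih hn,
          condMI_chain p hp.1 (⟨n+1, h⟩ : Fin M) (Finset.Iic (⟨n, hn⟩ : Fin M))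
            (Finset.Ioi (⟨n+1, h⟩ : Fin M)), h3]
        ring
    intro k
    exact main k.1 k.2
  · intro i
    exact condMI_nonneg p hp.1 hp.2 {i} (Finset.Ioi i)
  · intro S
    refine Finset.induction_on_max S ?_ ?_
    · simpa using condMI_nonneg p hp.1 hp.2 ∅ ∅ᶜ
    · intro a s hlt ih
      have has : a ∉ s := fun h => lt_irrefl a (hlt a h)
      rw [Finset.sum_insert has]
      have hset : insert a ((insert a s)ᶜ) = sᶜ := by
        ext x
        simp only [Finset.mem_insert, Finset.mem_compl, Finset.mem_insert, not_or]
        constructor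
        · rintro (rfl | ⟨-, hx⟩)
          · exact has
          · exact hx
        · intro hx
          by_cases hxa : x = a
          · exact Or.inl hxa
          · exact Or.inr ⟨hxa, hx⟩
      have hchain := condMI_chain p hp.1 a s ((insert a s)ᶜ)
      rw [hset] at hchain
      have hsub : Finset.Ioi a ⊆ (insert a s)ᶜ := by
        intro x hx
        rw [Finset.mem_Ioi] at hx
        rw [Finset.mem_compl, Finset.mem_insert, not_or]
        exact ⟨ne_of_gt hx, fun hxs => (hlt x hxs).asymm hx⟩
      have hia : a ∉ (insert a s)ᶜ := by simp
      have hmono := condMI_mono p hp.1 hp.2 hind hsub hia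
      calc condMI p {a} (Finset.Ioi a) + ∑ i ∈ s, condMI p {i} (Finset.Ioi i)
          ≤ condMI p {a} ((insert a s)ᶜ) + condMI p s sᶜ := add_le_add hmono ih
        _ = condMI p (insert a s) ((insert a s)ᶜ) := by rw [hchain]; ring
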